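/- For every integer g ≥ 2 and every real t ∈ (0,1): (1−t) · P²ℝ_{g,g+1}(t) / (1+t)^{g} = (1+t)^{g−1} · ((1+t²)^{g} − (2t)^{g}) / (1−t)². (This is the mod 2 Poincaré polynomial of the moduli space of semistable real holomorphic rank-2, degree-1 bundles with fixed determinant on a maximal real algebraic curve of genus g, as conjectured by Saveliev and Wang.) -/
import Mathlib


open Finset

noncomputable section

/-- `ang x` is `⟨x⟩ = ⌊x⌋ + 1 - x`, the unique element of `(0,1]` with `x + ⟨x⟩ ∈ ℤ`. -/
def ang (x : ℝ) : ℝ := (⌊x⌋ : ℝ) + 1 - x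

/-- `P²ℝ_{g,n}(t)`, the mod 2 equivariant Poincaré series of semistable real holomorphic
structures of rank 2 and degree 1 on a Klein surface of type `(g,n,a)`, `n > 0`. -/
def P2R (g n : ℕ) (t : ℝ) : ℝ :=
  (1+t)^(g+n+1) * (1+t^2)^n * (1+t^3)^(g+1-n) / ((1-t^2)^2 * (1-t^4)) -
    2^(n-1) * (1+t)^(2*g+2) * t^g / (1-t^2)^3

/-- The Saveliev–Wang formula for the mod 2 Poincaré polynomial of the moduli space of
semistable real rank 2, degree 1 bundles with fixed determinant on a maximal real curve. -/
theorem stmt13 (g : ℕ) (hg : 2 ≤ g) (t : ℝ) (ht : t ∈ Set.Ioo (0:ℝ) 1) :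
    (1 - t) * P2R g (g+1) t / (1+t)^g =
      (1+t)^(g-1) * ((1+t^2)^g - (2*t)^g) / (1-t)^2 := by
  obtain ⟨ht0, ht1⟩ := ht
  obtain ⟨k, rfl⟩ : ∃ k, g = k + 1 := ⟨g - 1, by omega⟩
  have h1 : (1:ℝ) - t ≠ 0 := by nlinarith
  have h2 : (1:ℝ) + t ≠ 0 := by nlinarith
  have h3 : (1:ℝ) - t^2 ≠ 0 := by nlinarith
  have h4 : (1:ℝ) - t^4 ≠ 0 := by
    nlinarith [pow_lt_one₀ (le_of_lt ht0) ht1 (by norm_num : 4 ≠ 0)]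
  unfold P2R
  have e0 : k + 1 + 1 - (k + 1 + 1) = 0 := by omega
  have e1 : k + 1 + (k + 1 + 1) + 1 = 2*(k+1)+2 := by ring
  have e2 : k + 1 + 1 - 1 = k + 1 := by omega
  have e3 : k + 1 - 1 = k := by omega
  rw [e0, e1, e2, e3]
  field_simp
  ring

end
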